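/- Let Ω be homogeneous of degree 0 on ℝⁿ with L¹-modulus of continuity ω(t) = sup_{|h|≤t} ∫_{S^{n−1}} |Ω(x'+h) − Ω(x')| dσ(x'), and let α ∈ [0,n). Then for every ρ > 0 and every y ∈ ℝⁿ, ∫_{|x|>ρ} |Ω(x−y) − Ω(x)|/|x|^{n−α} dx ≤ |y|^α ∫₀^{|y|/ρ} ω(s)/s^{1+α} ds. -/

import Mathlib

open MeasureTheory Metric Set Filter
open scoped ENNReal Topology

/-- The `L¹` integral continuity modulus of `Ω`:
`ω(t) = sup_{|h| ≤ t} ∫_{S^{n-1}} |Ω(x'+h) - Ω(x')| dσ(x')`. -/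
noncomputable def omegaMod (n : ℕ) (Ω : EuclideanSpace ℝ (Fin n) → ℝ) (t : ℝ) : ℝ≥0∞ :=
  ⨆ (h : EuclideanSpace ℝ (Fin n)) (_ : ‖h‖ ≤ t),
    ∫⁻ x' : sphere (0:EuclideanSpace ℝ (Fin n)) 1,
      ENNReal.ofReal |Ω ((x' : EuclideanSpace ℝ (Fin n)) + h) - Ω (x' : EuclideanSpace ℝ (Fin n))|
      ∂(volume : Measure (EuclideanSpace ℝ (Fin n))).toSphere

/-- Change of variables `s = c / t` for lower Lebesgue integrals. -/
lemma cov_aux {c ρ : ℝ} (hc : 0 < c) (hρ : 0 < ρ) (w : ℝ → ℝ≥0∞) :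
    ∫⁻ s in Set.Ioo (0:ℝ) (c/ρ), w s
      = ∫⁻ t in Set.Ioi ρ, ENNReal.ofReal (c / t^2) * w (c / t) := by
  have himg : (fun t : ℝ => c / t) '' Set.Ioi ρ = Set.Ioo 0 (c/ρ) := by
    ext z
    constructor
    · rintro ⟨t, ht, rfl⟩
      have ht0 : 0 < t := hρ.trans ht
      exact ⟨div_pos hc ht0, div_lt_div_of_pos_left hc hρ ht⟩
    · rintro ⟨hz0, hz⟩
      refine ⟨c / z, ?_, by field_simp⟩
      rw [Set.mem_Ioi, lt_div_iff₀ hz0, mul_comm]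
      exact (lt_div_iff₀ hρ).mp hz
  have hderiv : ∀ t ∈ Set.Ioi ρ,
      HasDerivWithinAt (fun t : ℝ => c / t) (-(c / t^2)) (Set.Ioi ρ) t := by
    intro t ht
    have ht0 : t ≠ 0 := (hρ.trans ht).ne'
    have h1 : HasDerivAt (fun t : ℝ => c * t⁻¹) (c * -(t^2)⁻¹) t :=
      (hasDerivAt_inv ht0).const_mul c
    have h2 : HasDerivAt (fun t : ℝ => c / t) (-(c / t^2)) t := by
      simpa only [div_eq_mul_inv, mul_neg, neg_mul] using h1
    exact h2.hasDerivWithinAt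
  have hinj : Set.InjOn (fun t : ℝ => c / t) (Set.Ioi ρ) := by
    intro a ha b hb h
    have ha0 : a ≠ 0 := (hρ.trans ha).ne'
    have hb0 : b ≠ 0 := (hρ.trans hb).ne'
    field_simp at h
    rcases h with h | h
    · rfl
  rw [← himg]
  rw [lintegral_image_eq_lintegral_abs_det_fderiv_mul volume measurableSet_Ioi
    (f' := fun t => ContinuousLinearMap.smulRight (1 : ℝ →L[ℝ] ℝ) (-(c / t^2)))
    (fun t ht => (hderiv t ht).hasFDerivWithinAt) hinj w]
  refine lintegral_congr_ae ?_
  filter_upwards [ae_restrict_mem measurableSet_Ioi] with t ht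
  have ht0 : 0 < t := hρ.trans ht
  rw [ContinuousLinearMap.smulRight_one_eq_toSpanSingleton, ContinuousLinearMap.det_toSpanSingleton, abs_neg,
    abs_of_pos (div_pos hc (pow_pos ht0 2))]

/-- For `Ω` homogeneous of degree `0` and `α ∈ [0,n)`, for every `ρ > 0` and `y`:
`∫_{|x|>ρ} |Ω(x-y) - Ω(x)|/|x|^{n-α} dx ≤ |y|^α ∫₀^{|y|/ρ} ω(s)/s^{1+α} ds`. -/
theorem stmt_12 {n : ℕ} (α : ℝ) (hα0 : 0 ≤ α) (hαn : α < n)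
    (Ω : EuclideanSpace ℝ (Fin n) → ℝ) (hΩm : Measurable Ω)
    (hΩhom : ∀ s : ℝ, 0 < s → ∀ x : EuclideanSpace ℝ (Fin n), Ω (s • x) = Ω x) :
    ∀ ρ : ℝ, 0 < ρ → ∀ y : EuclideanSpace ℝ (Fin n),
      (∫⁻ x in {x : EuclideanSpace ℝ (Fin n) | ρ < ‖x‖},
          ENNReal.ofReal |Ω (x - y) - Ω x| / ENNReal.ofReal (‖x‖ ^ ((n:ℝ) - α)))
        ≤ ENNReal.ofReal (‖y‖ ^ α) *
            ∫⁻ s in Set.Ioo (0:ℝ) (‖y‖ / ρ), omegaMod n Ω s / ENNReal.ofReal (s ^ (1 + α)) := by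
  intro ρ hρ y
  by_cases hy : y = 0
  · subst hy
    simp only [sub_zero, sub_self, abs_zero, ENNReal.ofReal_zero, ENNReal.zero_div,
      lintegral_zero]
    exact zero_le
  have hn : 0 < n := by exact_mod_cast hα0.trans_lt hαn
  set c : ℝ := ‖y‖ with hcdef
  have hc : 0 < c := norm_pos_iff.2 hy
  haveI : Nontrivial (EuclideanSpace ℝ (Fin n)) := by
    have hfr : 0 < Module.finrank ℝ (EuclideanSpace ℝ (Fin n)) := by
      rw [finrank_euclideanSpace_fin]; exact hn
    exact Module.nontrivial_of_finrank_pos hfr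
  set g : EuclideanSpace ℝ (Fin n) → ℝ≥0∞ :=
    fun x => ENNReal.ofReal |Ω (x - y) - Ω x| / ENNReal.ofReal (‖x‖ ^ ((n:ℝ) - α)) with hgdef
  set S : Set (EuclideanSpace ℝ (Fin n)) := {x | ρ < ‖x‖} with hSdef
  have hSm : MeasurableSet S := (isOpen_lt continuous_const continuous_norm).measurableSet
  set G : EuclideanSpace ℝ (Fin n) → ℝ≥0∞ := S.indicator g with hGdef
  have hgm : Measurable g := by
    apply Measurable.div
    · exact ((hΩm.comp (measurable_id.sub measurable_const)).sub hΩm).abs.ennreal_ofReal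
    · exact (measurable_norm.pow_const _).ennreal_ofReal
  have hGm : Measurable G := hgm.indicator hSm
  -- intermediate integral
  set ψ : ℝ → ℝ≥0∞ :=
    fun t => omegaMod n Ω (c / t) / ENNReal.ofReal (t ^ ((n:ℝ) - α)) with hψdef
  have key : (∫⁻ x in S, g x) ≤ ∫⁻ t in Set.Ioi ρ,
      omegaMod n Ω (c / t) * ENNReal.ofReal (t ^ (α - 1)) := by
    classical
    have h1 : (∫⁻ x in S, g x) = ∫⁻ x, G x := (lintegral_indicator hSm g).symm
    have h2 : (∫⁻ x, G x) =
        ∫⁻ a : ({(0 : EuclideanSpace ℝ (Fin n))}ᶜ : Set (EuclideanSpace ℝ (Fin n))), G a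
          ∂((volume : Measure (EuclideanSpace ℝ (Fin n))).comap Subtype.val) := by
      rw [lintegral_subtype_comap (measurableSet_singleton
        (0 : EuclideanSpace ℝ (Fin n))).compl G, MeasureTheory.restrict_compl_singleton]
    set f : sphere (0 : EuclideanSpace ℝ (Fin n)) 1 × Set.Ioi (0:ℝ) → ℝ≥0∞ :=
      fun p => G ((p.2 : ℝ) • (p.1 : EuclideanSpace ℝ (Fin n))) with hfdef
    have hfm : Measurable f := by
      apply hGm.comp
      exact ((continuous_subtype_val.comp continuous_snd).smul
        (continuous_subtype_val.comp continuous_fst)).measurable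
    have mp := (volume :
      Measure (EuclideanSpace ℝ (Fin n))).measurePreserving_homeomorphUnitSphereProd
    rw [finrank_euclideanSpace_fin] at mp
    have h3 : (∫⁻ a : ({(0 : EuclideanSpace ℝ (Fin n))}ᶜ : Set (EuclideanSpace ℝ (Fin n))), G a
          ∂((volume : Measure (EuclideanSpace ℝ (Fin n))).comap Subtype.val))
        = ∫⁻ p, f p ∂(((volume : Measure (EuclideanSpace ℝ (Fin n))).toSphere).prod
            (MeasureTheory.Measure.volumeIoiPow (n - 1))) := by
      rw [← mp.lintegral_comp hfm]
      refine lintegral_congr fun a => ?_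
      have ha : (a : EuclideanSpace ℝ (Fin n)) ≠ 0 := a.2
      simp only [hfdef, homeomorphUnitSphereProd_apply_fst_coe,
        homeomorphUnitSphereProd_apply_snd_coe]
      rw [smul_inv_smul₀ (norm_ne_zero_iff.2 ha)]
    have h4 : (∫⁻ p, f p ∂(((volume : Measure (EuclideanSpace ℝ (Fin n))).toSphere).prod
            (MeasureTheory.Measure.volumeIoiPow (n - 1))))
        = ∫⁻ r : Set.Ioi (0:ℝ), (∫⁻ x' : sphere (0 : EuclideanSpace ℝ (Fin n)) 1, f (x', r)
            ∂(volume : Measure (EuclideanSpace ℝ (Fin n))).toSphere)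
            ∂(MeasureTheory.Measure.volumeIoiPow (n - 1)) :=
      lintegral_prod_symm f hfm.aemeasurable
    have hbound : ∀ r : Set.Ioi (0:ℝ),
        (∫⁻ x' : sphere (0 : EuclideanSpace ℝ (Fin n)) 1, f (x', r)
            ∂(volume : Measure (EuclideanSpace ℝ (Fin n))).toSphere)
          ≤ (Set.Ioi ρ).indicator ψ (r : ℝ) := by
      intro r
      have hr0 : (0:ℝ) < (r : ℝ) := r.2
      have hnorm : ∀ x' : sphere (0 : EuclideanSpace ℝ (Fin n)) 1,
          ‖(r : ℝ) • (x' : EuclideanSpace ℝ (Fin n))‖ = (r : ℝ) := by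
        intro x'
        rw [norm_smul, mem_sphere_zero_iff_norm.1 x'.2, mul_one, Real.norm_eq_abs,
          abs_of_pos hr0]
      by_cases hrρ : ρ < (r : ℝ)
      · rw [Set.indicator_of_mem (show (r:ℝ) ∈ Set.Ioi ρ from hrρ) ψ]
        set h : EuclideanSpace ℝ (Fin n) := -((r : ℝ)⁻¹ • y) with hhdef
        have hfeq : ∀ x' : sphere (0 : EuclideanSpace ℝ (Fin n)) 1, f (x', r) =
            ENNReal.ofReal |Ω ((x' : EuclideanSpace ℝ (Fin n)) + h)
              - Ω (x' : EuclideanSpace ℝ (Fin n))| *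
              (ENNReal.ofReal ((r : ℝ) ^ ((n:ℝ) - α)))⁻¹ := by
          intro x'
          have hmem : (r : ℝ) • (x' : EuclideanSpace ℝ (Fin n)) ∈ S := by
            simp only [hSdef, Set.mem_setOf_eq, hnorm x']
            exact hrρ
          have e0 : f (x', r) = g ((r : ℝ) • (x' : EuclideanSpace ℝ (Fin n))) := by
            simp only [hfdef, hGdef]
            exact Set.indicator_of_mem hmem g
          have e1 : (r : ℝ) • ((x' : EuclideanSpace ℝ (Fin n)) + h)
              = (r : ℝ) • (x' : EuclideanSpace ℝ (Fin n)) - y := by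
            rw [hhdef, smul_add, smul_neg, smul_smul, mul_inv_cancel₀ hr0.ne', one_smul]
            rw [sub_eq_add_neg]
          have e2 : Ω ((r : ℝ) • (x' : EuclideanSpace ℝ (Fin n)) - y)
              = Ω ((x' : EuclideanSpace ℝ (Fin n)) + h) := by
            rw [← e1, hΩhom _ hr0]
          have e3 : Ω ((r : ℝ) • (x' : EuclideanSpace ℝ (Fin n)))
              = Ω (x' : EuclideanSpace ℝ (Fin n)) := hΩhom _ hr0 _
          rw [e0, hgdef]
          simp only [e2, e3, hnorm x']
          rw [div_eq_mul_inv]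
        have hh : ‖h‖ ≤ c / (r : ℝ) := by
          rw [hhdef, norm_neg, norm_smul, Real.norm_eq_abs, abs_of_pos (inv_pos.2 hr0),
            ← hcdef, inv_mul_eq_div]
        calc (∫⁻ x' : sphere (0 : EuclideanSpace ℝ (Fin n)) 1, f (x', r)
                ∂(volume : Measure (EuclideanSpace ℝ (Fin n))).toSphere)
            = (∫⁻ x' : sphere (0 : EuclideanSpace ℝ (Fin n)) 1,
                ENNReal.ofReal |Ω ((x' : EuclideanSpace ℝ (Fin n)) + h)
                  - Ω (x' : EuclideanSpace ℝ (Fin n))|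
                ∂(volume : Measure (EuclideanSpace ℝ (Fin n))).toSphere) *
                (ENNReal.ofReal ((r : ℝ) ^ ((n:ℝ) - α)))⁻¹ := by
              rw [← lintegral_mul_const' _ _ (by
                simp only [ne_eq, ENNReal.inv_eq_top]
                exact (ENNReal.ofReal_pos.2 (Real.rpow_pos_of_pos hr0 _)).ne')]
              exact lintegral_congr fun x' => hfeq x'
          _ ≤ omegaMod n Ω (c / (r : ℝ)) * (ENNReal.ofReal ((r : ℝ) ^ ((n:ℝ) - α)))⁻¹ := by
              refine mul_le_mul_left ?_ _
              exact le_iSup₂_of_le h hh le_rfl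
          _ = ψ (r : ℝ) := by
              simp only [hψdef]
              rw [div_eq_mul_inv (omegaMod n Ω (c / (r:ℝ)))]
      · rw [Set.indicator_of_notMem (show (r:ℝ) ∉ Set.Ioi ρ from hrρ) ψ]
        have : ∀ x' : sphere (0 : EuclideanSpace ℝ (Fin n)) 1, f (x', r) = 0 := by
          intro x'
          have hmem : (r : ℝ) • (x' : EuclideanSpace ℝ (Fin n)) ∉ S := by
            simp only [hSdef, Set.mem_setOf_eq, hnorm x']
            exact hrρ
          simp only [hfdef, hGdef]
          exact Set.indicator_of_notMem hmem g
        rw [lintegral_congr this, lintegral_zero]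
    have h5 : (∫⁻ r : Set.Ioi (0:ℝ), (Set.Ioi ρ).indicator ψ (r : ℝ)
          ∂(MeasureTheory.Measure.volumeIoiPow (n - 1)))
        = ∫⁻ t in Set.Ioi (0:ℝ), ENNReal.ofReal (t ^ (n - 1)) * (Set.Ioi ρ).indicator ψ t := by
      rw [MeasureTheory.Measure.volumeIoiPow,
        lintegral_withDensity_eq_lintegral_mul_non_measurable _
          ((measurable_subtype_coe.pow_const _).ennreal_ofReal)
          (Eventually.of_forall fun _ => ENNReal.ofReal_lt_top)]
      simp only [Pi.mul_apply]
      exact lintegral_subtype_comap measurableSet_Ioi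
        (fun t => ENNReal.ofReal (t ^ (n - 1)) * (Set.Ioi ρ).indicator ψ t)
    have h6 : (∫⁻ t in Set.Ioi (0:ℝ), ENNReal.ofReal (t ^ (n - 1)) *
          (Set.Ioi ρ).indicator ψ t)
        = ∫⁻ t in Set.Ioi ρ, ENNReal.ofReal (t ^ (n - 1)) * ψ t := by
      have hind : ∀ t : ℝ, ENNReal.ofReal (t ^ (n - 1)) * (Set.Ioi ρ).indicator ψ t
          = (Set.Ioi ρ).indicator (fun t => ENNReal.ofReal (t ^ (n - 1)) * ψ t) t := by
        intro t
        by_cases ht : t ∈ Set.Ioi ρ <;>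
          simp [Set.indicator_of_mem, Set.indicator_of_notMem, ht]
      simp_rw [hind]
      rw [lintegral_indicator measurableSet_Ioi, Measure.restrict_restrict measurableSet_Ioi,
        Set.inter_eq_left.mpr (Set.Ioi_subset_Ioi hρ.le)]
    have h7 : (∫⁻ t in Set.Ioi ρ, ENNReal.ofReal (t ^ (n - 1)) * ψ t)
        = ∫⁻ t in Set.Ioi ρ, omegaMod n Ω (c / t) * ENNReal.ofReal (t ^ (α - 1)) := by
      refine lintegral_congr_ae ?_
      filter_upwards [ae_restrict_mem measurableSet_Ioi] with t ht
      have ht0 : 0 < t := hρ.trans ht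
      have hnp : t ^ (n - 1 : ℕ) = t ^ ((n:ℝ) - 1) := by
        rw [← Real.rpow_natCast t (n - 1), Nat.cast_sub hn, Nat.cast_one]
      have hinv : (ENNReal.ofReal (t ^ ((n:ℝ) - α)))⁻¹
          = ENNReal.ofReal ((t ^ ((n:ℝ) - α))⁻¹) :=
        (ENNReal.ofReal_inv_of_pos (Real.rpow_pos_of_pos ht0 _)).symm
      have hreal : t ^ ((n:ℝ) - 1) * (t ^ ((n:ℝ) - α))⁻¹ = t ^ (α - 1) := by
        rw [← Real.rpow_neg ht0.le, ← Real.rpow_add ht0]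
        ring_nf
      rw [hψdef]
      simp only []
      rw [div_eq_mul_inv, hinv, hnp, mul_left_comm,
        ← ENNReal.ofReal_mul (Real.rpow_pos_of_pos ht0 _).le, hreal]
    calc (∫⁻ x in S, g x)
        = ∫⁻ r : Set.Ioi (0:ℝ), (∫⁻ x' : sphere (0 : EuclideanSpace ℝ (Fin n)) 1, f (x', r)
            ∂(volume : Measure (EuclideanSpace ℝ (Fin n))).toSphere)
            ∂(MeasureTheory.Measure.volumeIoiPow (n - 1)) := by
          rw [h1, h2, h3, h4]
      _ ≤ ∫⁻ r : Set.Ioi (0:ℝ), (Set.Ioi ρ).indicator ψ (r : ℝ)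
            ∂(MeasureTheory.Measure.volumeIoiPow (n - 1)) := lintegral_mono hbound
      _ = ∫⁻ t in Set.Ioi ρ, omegaMod n Ω (c / t) * ENNReal.ofReal (t ^ (α - 1)) := by
          rw [h5, h6, h7]
  have rhs : ENNReal.ofReal (c ^ α) *
      (∫⁻ s in Set.Ioo (0:ℝ) (c / ρ), omegaMod n Ω s / ENNReal.ofReal (s ^ (1 + α)))
      = ∫⁻ t in Set.Ioi ρ, omegaMod n Ω (c / t) * ENNReal.ofReal (t ^ (α - 1)) := by
    rw [cov_aux hc hρ (fun s => omegaMod n Ω s / ENNReal.ofReal (s ^ (1 + α))),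
      ← lintegral_const_mul' _ _ ENNReal.ofReal_ne_top]
    refine lintegral_congr_ae ?_
    filter_upwards [ae_restrict_mem measurableSet_Ioi] with t ht
    have ht0 : 0 < t := hρ.trans ht
    have hct : 0 < c / t := div_pos hc ht0
    have hD0 : 0 < (c / t) ^ (1 + α) := Real.rpow_pos_of_pos hct _
    have hreal : c ^ α * (c / t ^ 2) * (((c / t) ^ (1 + α))⁻¹) = t ^ (α - 1) := by
      have e1 : (c / t) ^ (1 + α) = (c * c ^ α) / (t * t ^ α) := by
        rw [Real.div_rpow hc.le ht0.le, Real.rpow_add hc, Real.rpow_one,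
          Real.rpow_add ht0, Real.rpow_one]
      have e2 : t ^ (α - 1) = t ^ α / t := by
        rw [Real.rpow_sub ht0, Real.rpow_one]
      have hca : c ^ α ≠ 0 := (Real.rpow_pos_of_pos hc _).ne'
      have hta : t ^ α ≠ 0 := (Real.rpow_pos_of_pos ht0 _).ne'
      rw [e1, e2]
      field_simp
    rw [div_eq_mul_inv (omegaMod n Ω (c / t)), ← ENNReal.ofReal_inv_of_pos hD0]
    have hcomm : ENNReal.ofReal (c ^ α) * (ENNReal.ofReal (c / t ^ 2) *
        (omegaMod n Ω (c / t) * ENNReal.ofReal (((c / t) ^ (1 + α))⁻¹)))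
        = omegaMod n Ω (c / t) * (ENNReal.ofReal (c ^ α) * ENNReal.ofReal (c / t ^ 2) *
            ENNReal.ofReal (((c / t) ^ (1 + α))⁻¹)) := by ring
    rw [hcomm, ← ENNReal.ofReal_mul (Real.rpow_pos_of_pos hc α).le,
      ← ENNReal.ofReal_mul (by positivity), hreal]
  calc (∫⁻ x in S, g x)
      ≤ ∫⁻ t in Set.Ioi ρ, omegaMod n Ω (c / t) * ENNReal.ofReal (t ^ (α - 1)) := key
    _ = ENNReal.ofReal (c ^ α) *
          (∫⁻ s in Set.Ioo (0:ℝ) (c / ρ), omegaMod n Ω s / ENNReal.ofReal (s ^ (1 + α))) :=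
        rhs.symm
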